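/- Let p be a prime with p ≡ 3 (mod 4). Then the following exact identity of rational numbers holds: ∑_{k=0}^{p-1} (2^{−k} + 1)·u_k(2,2) = 2 − (−1)^{(p+1)/4}·2^{(p−1)/2}. -/

import Mathlib

/-- The Lucas sequence `u_n(A,B)`. -/
def lucasU (A B : ℤ) : ℕ → ℤ
  | 0 => 0
  | 1 => 1
  | n + 2 => A * lucasU A B (n + 1) - B * lucasU A B n

lemma lucasU_add_four (n : ℕ) : lucasU 2 2 (n + 4) = -4 * lucasU 2 2 n := by
  show lucasU 2 2 (n + 2 + 2) = _
  rw [lucasU, show n + 2 + 1 = n + 1 + 2 from rfl, lucasU, lucasU]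
  ring

lemma lucasU_four_mul (m : ℕ) : lucasU 2 2 (4 * m) = 0 := by
  induction m with
  | zero => rfl
  | succ m ih =>
      have : 4 * (m + 1) = 4 * m + 4 := by ring
      rw [this, lucasU_add_four, ih, mul_zero]

lemma lucasU_four_mul_add_three (m : ℕ) : lucasU 2 2 (4 * m + 3) = (-4) ^ m * 2 := by
  induction m with
  | zero => rfl
  | succ m ih =>
      have : 4 * (m + 1) + 3 = (4 * m + 3) + 4 := by ring
      rw [this, lucasU_add_four, ih, pow_succ]
      ring

lemma lucasU_sum (n : ℕ) :
    ∑ k ∈ Finset.range n, ((2 : ℚ) ^ (-(k : ℤ)) + 1) * (lucasU 2 2 k : ℚ) =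
      2 + (lucasU 2 2 n : ℚ) - (lucasU 2 2 (n + 1) : ℚ)
        - (lucasU 2 2 (n + 1) : ℚ) / 2 ^ n := by
  induction n with
  | zero => norm_num [lucasU]
  | succ n ih =>
      rw [Finset.sum_range_succ, ih]
      have h2 : (lucasU 2 2 (n + 2) : ℚ) = 2 * lucasU 2 2 (n + 1) - 2 * lucasU 2 2 n := by
        rw [lucasU]; push_cast; ring
      have hz : (2 : ℚ) ^ (-(n : ℤ)) = 1 / 2 ^ n := by
        rw [zpow_neg, zpow_natCast, one_div]
      rw [show n + 1 + 1 = n + 2 from rfl, h2, hz]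
      have hpow : (2 : ℚ) ^ n ≠ 0 := by positivity
      field_simp
      ring

theorem stmt19 (p : ℕ) (hp : p.Prime) (h4 : p % 4 = 3) :
    ∑ k ∈ Finset.range p, ((2 : ℚ) ^ (-(k : ℤ)) + 1) * (lucasU 2 2 k : ℚ) =
      2 - (-1 : ℚ) ^ ((p + 1) / 4) * 2 ^ ((p - 1) / 2) := by
  obtain ⟨m, rfl⟩ : ∃ m, p = 4 * m + 3 := ⟨p / 4, by omega⟩
  have h1 : (4 * m + 3 + 1) / 4 = m + 1 := by omega
  have h2 : (4 * m + 3 - 1) / 2 = 2 * m + 1 := by omega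
  rw [lucasU_sum, h1, h2, show 4 * m + 3 + 1 = 4 * (m + 1) from by ring,
    lucasU_four_mul, lucasU_four_mul_add_three]
  push_cast
  have : ((-4 : ℚ)) ^ m = (-1) ^ m * 2 ^ (2 * m) := by
    rw [pow_mul]; norm_num [← neg_pow]
  rw [this, pow_succ, pow_succ]
  ring
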